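/- Define M_k = Σ_{m ≥ 1} Λ_k(m)² / m² for each positive integer k. Then M_k > 0 for every k ≥ 1 and the series Σ_{k ≥ 1} M_k^{−1/(2k)} diverges (Carleman's condition holds for the moment sequence (M_k)). -/

import Mathlib

open ArithmeticFunction

/-- `Lam k m` is the `k`-fold Dirichlet convolution of the von Mangoldt function with itself,
evaluated at `m`, i.e. `Λ_k(m) = Σ_{m = m₁⋯m_k} Λ(m₁)⋯Λ(m_k)`. -/
noncomputable def Lam (k m : ℕ) : ℝ := (ArithmeticFunction.vonMangoldt ^ k) m

lemma Lam_nonneg (k m : ℕ) : 0 ≤ Lam k m := by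
  induction k generalizing m with
  | zero =>
    simp only [Lam, pow_zero, ArithmeticFunction.one_apply]
    split <;> norm_num
  | succ k ih =>
    rw [Lam, pow_succ, ArithmeticFunction.mul_apply]
    exact Finset.sum_nonneg fun x _ => mul_nonneg (ih x.1) vonMangoldt_nonneg

lemma Lam_le (k m : ℕ) : Lam k m ≤ (Real.log m) ^ k := by
  induction k generalizing m with
  | zero =>
    simp only [Lam, pow_zero, ArithmeticFunction.one_apply]
    split <;> norm_num
  | succ k ih =>
    rcases Nat.eq_zero_or_pos m with rfl | hm
    · simp [Lam, pow_succ, ArithmeticFunction.mul_apply]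
    rw [Lam, pow_succ, ArithmeticFunction.mul_apply]
    have hlogm : 0 ≤ Real.log m := Real.log_natCast_nonneg m
    calc ∑ x ∈ m.divisorsAntidiagonal, (vonMangoldt ^ k) x.1 * vonMangoldt x.2
        ≤ ∑ x ∈ m.divisorsAntidiagonal, (Real.log m) ^ k * vonMangoldt x.2 := by
          refine Finset.sum_le_sum fun x hx => ?_
          have hx' := (Nat.mem_divisorsAntidiagonal.mp hx)
          have h1 : x.1 ∣ m := ⟨x.2, hx'.1.symm⟩
          have hle : Real.log x.1 ≤ Real.log m := by
            have : 0 < x.1 := Nat.pos_of_dvd_of_pos h1 hm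
            apply Real.log_le_log (by exact_mod_cast this)
            exact_mod_cast Nat.le_of_dvd hm h1
          refine mul_le_mul ?_ le_rfl vonMangoldt_nonneg (by positivity)
          exact (ih x.1).trans (pow_le_pow_left₀ (Real.log_natCast_nonneg _) hle k)
      _ = (Real.log m) ^ k * Real.log m := by
          rw [← Finset.mul_sum]
          congr 1
          rw [Nat.sum_divisorsAntidiagonal' (f := fun _ b => vonMangoldt b)]
          exact vonMangoldt_sum
      _ = (Real.log m) ^ (k + 1) := by ring

lemma Lam_pos (k : ℕ) (hk : 0 < k) : 0 < Lam k (2 ^ k) := by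
  induction k with
  | zero => omega
  | succ k ih =>
    rcases Nat.eq_zero_or_pos k with rfl | hk'
    · have : Lam 1 2 = Real.log 2 := by
        rw [Lam, pow_one, vonMangoldt_apply_prime Nat.prime_two]; norm_num
      simpa [this] using Real.log_pos (by norm_num)
    rw [Lam, pow_succ, ArithmeticFunction.mul_apply]
    have hmem : ((2 ^ k : ℕ), 2) ∈ (2 ^ (k + 1) : ℕ).divisorsAntidiagonal := by
      rw [Nat.mem_divisorsAntidiagonal]
      constructor
      · ring
      · positivity
    have hterm : 0 < (vonMangoldt ^ k) (2 ^ k) * vonMangoldt 2 := by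
      apply mul_pos (ih hk')
      rw [vonMangoldt_apply_prime Nat.prime_two]
      exact Real.log_pos (by norm_num)
    refine lt_of_lt_of_le hterm ?_
    exact Finset.single_le_sum (f := fun x : ℕ × ℕ => (vonMangoldt ^ k) x.1 * vonMangoldt x.2) (fun x _ => mul_nonneg (Lam_nonneg k x.1) vonMangoldt_nonneg) hmem

lemma log_bound (k m : ℕ) (hk : 0 < k) (hm : 1 ≤ m) :
    Real.log m ≤ (4 * k : ℝ) * (m : ℝ) ^ ((1 : ℝ) / (4 * k)) := by
  have hmpos : (0 : ℝ) < m := by exact_mod_cast hm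
  have hkpos : (0 : ℝ) < 4 * k := by positivity
  have h1 : Real.log ((m : ℝ) ^ ((1 : ℝ) / (4 * k))) = (1 / (4 * k)) * Real.log m :=
    Real.log_rpow hmpos _
  have h2 : Real.log ((m : ℝ) ^ ((1 : ℝ) / (4 * k))) ≤ (m : ℝ) ^ ((1 : ℝ) / (4 * k)) := by
    have := Real.log_le_sub_one_of_pos (x := (m : ℝ) ^ ((1 : ℝ) / (4 * k))) (by positivity)
    linarith
  rw [h1] at h2
  have := mul_le_mul_of_nonneg_left h2 hkpos.le
  rw [← mul_assoc, mul_one_div, div_self hkpos.ne', one_mul] at this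
  exact this

lemma term_bound (k : ℕ) (hk : 0 < k) (m : ℕ) :
    Lam k m ^ 2 / (m : ℝ) ^ 2 ≤ (4 * k : ℝ) ^ (2 * k) * ((m : ℝ) ^ ((3 : ℝ) / 2))⁻¹ := by
  rcases Nat.eq_zero_or_pos m with rfl | hm
  · simp [Real.zero_rpow (by norm_num : ((3:ℝ)/2) ≠ 0)]
  have hmpos : (0 : ℝ) < m := by exact_mod_cast hm
  have hlog : 0 ≤ Real.log m := Real.log_natCast_nonneg m
  have hL : Lam k m ^ 2 ≤ (Real.log m) ^ (2 * k) := by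
    have := pow_le_pow_left₀ (Lam_nonneg k m) (Lam_le k m) 2
    rwa [← pow_mul, mul_comm k 2] at this
  have hlb : (Real.log m) ^ (2 * k) ≤ (4 * k : ℝ) ^ (2 * k) * (m : ℝ) ^ ((1 : ℝ) / 2) := by
    calc (Real.log m) ^ (2 * k)
        ≤ ((4 * k : ℝ) * (m : ℝ) ^ ((1 : ℝ) / (4 * k))) ^ (2 * k) :=
          pow_le_pow_left₀ hlog (log_bound k m hk hm) _
      _ = (4 * k : ℝ) ^ (2 * k) * ((m : ℝ) ^ ((1 : ℝ) / (4 * k))) ^ (2 * k) := mul_pow _ _ _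
      _ = (4 * k : ℝ) ^ (2 * k) * (m : ℝ) ^ ((1 : ℝ) / 2) := by
          congr 1
          rw [← Real.rpow_natCast ((m : ℝ) ^ ((1 : ℝ) / (4 * k))) (2 * k),
            ← Real.rpow_mul hmpos.le]
          congr 1
          have : (k : ℝ) ≠ 0 := by positivity
          push_cast
          field_simp
          ring
  have key : (m : ℝ) ^ ((1 : ℝ) / 2) * (m : ℝ) ^ ((3 : ℝ) / 2) = (m : ℝ) ^ 2 := by
    rw [← Real.rpow_add hmpos, ← Real.rpow_natCast (m : ℝ) 2]
    norm_num
  have h3 : (0 : ℝ) < (m : ℝ) ^ ((3 : ℝ) / 2) := by positivity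
  calc Lam k m ^ 2 / (m : ℝ) ^ 2 ≤ (4 * k : ℝ) ^ (2 * k) * (m : ℝ) ^ ((1 : ℝ) / 2) / (m : ℝ) ^ 2 := by
        apply div_le_div_of_nonneg_right ?_ (by positivity) |>.trans_eq rfl
        exact hL.trans hlb
    _ = (4 * k : ℝ) ^ (2 * k) * ((m : ℝ) ^ ((3 : ℝ) / 2))⁻¹ := by
        rw [mul_div_assoc]
        congr 1
        rw [div_eq_iff (by positivity), inv_mul_eq_div, eq_div_iff h3.ne']
        exact key

lemma summable_term (k : ℕ) (hk : 0 < k) :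
    Summable (fun m : ℕ => Lam k m ^ 2 / (m : ℝ) ^ 2) := by
  refine Summable.of_nonneg_of_le (fun m => by positivity) (term_bound k hk) ?_
  exact (Real.summable_nat_rpow_inv.mpr (by norm_num)).mul_left _

/-- `Mmom k = Σ_{m ≥ 1} Λ_k(m)² / m²`. -/
noncomputable def Mmom (k : ℕ) : ℝ := ∑' m : ℕ, (Lam k m) ^ 2 / (m : ℝ) ^ 2

lemma Mmom_pos (k : ℕ) (hk : 0 < k) : 0 < Mmom k := by
  have hs := summable_term k hk
  have h2 : 0 < Lam k (2 ^ k) ^ 2 / ((2 ^ k : ℕ) : ℝ) ^ 2 := by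
    have := Lam_pos k hk
    positivity
  exact h2.trans_le (Summable.le_tsum hs (2 ^ k) fun m _ => by positivity)

noncomputable def Cz : ℝ := ∑' m : ℕ, ((m : ℝ) ^ ((3 : ℝ) / 2))⁻¹

lemma Cz_summable : Summable (fun m : ℕ => ((m : ℝ) ^ ((3 : ℝ) / 2))⁻¹) :=
  Real.summable_nat_rpow_inv.mpr (by norm_num)

lemma one_le_Cz : 1 ≤ Cz := by
  have h := Summable.le_tsum Cz_summable 1 (fun m _ => by positivity)
  simpa [Cz] using h

lemma Mmom_le (k : ℕ) (hk : 0 < k) : Mmom k ≤ (4 * k : ℝ) ^ (2 * k) * Cz := by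
  have h := Summable.tsum_le_tsum (term_bound k hk) (summable_term k hk) (Cz_summable.mul_left _)
  rwa [tsum_mul_left] at h

set_option maxHeartbeats 1000000 in
/-- `M_k > 0` for every `k ≥ 1` and the series `Σ_{k ≥ 1} M_k^{-1/(2k)}` diverges
(Carleman's condition holds for the moment sequence `(M_k)`). -/
theorem stmt_16 :
    (∀ k : ℕ, 0 < k → 0 < Mmom k) ∧
      ¬ Summable (fun k : ℕ => Mmom (k + 1) ^ (-(1 / (2 * ((k : ℝ) + 1))))) := by
  refine ⟨fun k hk => Mmom_pos k hk, fun hsum => ?_⟩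
  have hC1 : 1 ≤ Cz := one_le_Cz
  have hCpos : 0 < Cz := lt_of_lt_of_le one_pos hC1
  have key : ∀ k : ℕ, (Cz⁻¹ / 4) * (1 / ((k : ℝ) + 1)) ≤
      Mmom (k + 1) ^ (-(1 / (2 * ((k : ℝ) + 1)))) := by
    intro k
    set s : ℝ := 1 / (2 * ((k : ℝ) + 1)) with hs
    have hkpos : (0 : ℝ) < (k : ℝ) + 1 := by positivity
    have hspos : 0 < s := by positivity
    have hs1 : s ≤ 1 := by
      rw [hs, div_le_one (by positivity : (0:ℝ) < 2 * ((k : ℝ) + 1))]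
      nlinarith [(Nat.cast_nonneg k : (0:ℝ) ≤ k)]
    have hM := Mmom_pos (k + 1) k.succ_pos
    have hA := Mmom_le (k + 1) k.succ_pos
    have h4k : (0 : ℝ) ≤ (4 * (k + 1 : ℕ) : ℝ) := by positivity
    have h1 : Mmom (k + 1) ^ s ≤ ((4 * (k + 1 : ℕ) : ℝ) ^ (2 * (k + 1)) * Cz) ^ s :=
      Real.rpow_le_rpow hM.le hA hspos.le
    have h2 : ((4 * (k + 1 : ℕ) : ℝ) ^ (2 * (k + 1)) * Cz) ^ s
        = ((4 * (k + 1 : ℕ) : ℝ) ^ (2 * (k + 1)) : ℝ) ^ s * Cz ^ s :=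
      Real.mul_rpow (by positivity) hCpos.le
    have h3 : ((4 * (k + 1 : ℕ) : ℝ) ^ (2 * (k + 1)) : ℝ) ^ s = 4 * ((k : ℝ) + 1) := by
      rw [← Real.rpow_natCast (4 * (k + 1 : ℕ) : ℝ) (2 * (k + 1)), ← Real.rpow_mul h4k]
      have : ((2 * (k + 1) : ℕ) : ℝ) * s = 1 := by
        rw [hs]
        push_cast
        field_simp
      rw [this, Real.rpow_one]
      push_cast
      ring
    have h4 : Cz ^ s ≤ Cz := by
      have := Real.rpow_le_rpow_of_exponent_le hC1 hs1
      rwa [Real.rpow_one] at this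
    have h5 : Mmom (k + 1) ^ s ≤ 4 * ((k : ℝ) + 1) * Cz := by
      calc Mmom (k + 1) ^ s ≤ _ := h1
        _ = _ := h2
        _ ≤ 4 * ((k : ℝ) + 1) * Cz := by
            rw [h3]
            have h0 : (0 : ℝ) ≤ 4 * ((k : ℝ) + 1) := by positivity
            exact mul_le_mul_of_nonneg_left h4 h0
    rw [Real.rpow_neg hM.le]
    have hMs : 0 < Mmom (k + 1) ^ s := Real.rpow_pos_of_pos hM _
    have h6 : (4 * ((k : ℝ) + 1) * Cz)⁻¹ ≤ (Mmom (k + 1) ^ s)⁻¹ :=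
      inv_anti₀ hMs h5
    refine le_trans (le_of_eq ?_) h6
    field_simp
  have hq : 0 < Cz⁻¹ / 4 := by
    have := inv_pos.mpr hCpos
    linarith
  have hsum2 : Summable (fun k : ℕ => (Cz⁻¹ / 4) * (1 / ((k : ℝ) + 1))) :=
    Summable.of_nonneg_of_le (fun k => mul_nonneg hq.le (by positivity)) key hsum
  have hne : (Cz⁻¹ / 4) ≠ 0 := hq.ne'
  have hsum3 : Summable (fun k : ℕ => 1 / ((k : ℝ) + 1)) :=
    (summable_mul_left_iff hne).mp hsum2
  have hsum4 : Summable (fun n : ℕ => 1 / (((n + 1 : ℕ)) : ℝ)) := by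
    have he : (fun n : ℕ => 1 / (((n + 1 : ℕ)) : ℝ)) = fun n : ℕ => 1 / ((n : ℝ) + 1) := by
      funext n
      push_cast
      ring
    rw [he]
    exact hsum3
  have := (summable_nat_add_iff (f := fun n : ℕ => 1 / (n : ℝ)) 1).mp hsum4
  exact Real.not_summable_one_div_natCast this
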